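/- Let 𝔞 be a symmetric bilinear form on the real Hilbert space V ⊆ W^{1,2}(Ω) with the ideal decomposition V = V_H ⊕ W_0^{1,2}(Ω), and let 𝔟 be the induced form on Tr(V_H). If u ∈ V_H is real-valued and u⁺ = u_0 + u_1, u⁻ = v_0 + v_1 are the decompositions of its positive and negative parts with u_0, v_0 ∈ W_0^{1,2}(Ω) and u_1, v_1 ∈ V_H, then u_0 = v_0 and 𝔟(Tr u⁺, Tr u⁻) = 𝔞(u⁺,u⁻) − 𝔞(u_0,u_0). -/
import Mathlib


/- STATEMENT 8: Let `𝔞` be a symmetric bilinear form on the real vector lattice `V`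
(a sublattice of `W^{1,2}(Ω)`) with the decomposition `V = V_H ⊕ W₀^{1,2}(Ω)`
(only the uniqueness part, `V_H ∩ W₀ = {0}`, is needed), where
`V_H = {u : 𝔞(u,g) = 0 ∀ g ∈ W₀}`, and let `𝔟` be the induced form on `Tr(V_H)`,
`𝔟(Tr u, Tr v) = 𝔞(u,v)` for `u, v ∈ V_H`. If `u ∈ V_H` and `u⁺ = u₀ + u₁`,
`u⁻ = v₀ + v₁` with `u₀, v₀ ∈ W₀` and `u₁, v₁ ∈ V_H`, then `u₀ = v₀` and
`𝔟(Tr u⁺, Tr u⁻) = 𝔞(u₁, v₁) = 𝔞(u⁺, u⁻) − 𝔞(u₀, u₀)`. -/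

theorem positive_part_decomposition_identity
    {V : Type*} [AddCommGroup V] [Module ℝ V] [Lattice V]
    [CovariantClass V V (· + ·) (· ≤ ·)]
    (W₀ : Submodule ℝ V)
    (a : V →ₗ[ℝ] V →ₗ[ℝ] ℝ)
    (hsymm : ∀ x y : V, a x y = a y x)
    -- uniqueness in the decomposition `V = V_H ⊕ W₀`:
    (hdisjoint : ∀ x : V, (∀ g ∈ W₀, a x g = 0) → x ∈ W₀ → x = 0)
    (u u₀ u₁ v₀ v₁ : V)
    (hu : ∀ g ∈ W₀, a u g = 0)            -- `u ∈ V_H`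
    (hup : u⁺ = u₀ + u₁) (hu₀ : u₀ ∈ W₀) (hu₁ : ∀ g ∈ W₀, a u₁ g = 0)
    (hum : u⁻ = v₀ + v₁) (hv₀ : v₀ ∈ W₀) (hv₁ : ∀ g ∈ W₀, a v₁ g = 0) :
    u₀ = v₀ ∧ a u₁ v₁ = a u⁺ u⁻ - a u₀ u₀ := by

  have key : u₀ - v₀ = 0 := by
    apply hdisjoint
    · intro g hg
      have h1 : u₀ - v₀ = u - (u₁ - v₁) := by
        have := posPart_sub_negPart u
        rw [hup, hum] at this
        rw [← this]; abel
      rw [h1]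
      simp only [map_sub, LinearMap.sub_apply]
      rw [hu g hg, hu₁ g hg, hv₁ g hg]; ring
    · exact sub_mem hu₀ hv₀
  refine ⟨sub_eq_zero.mp key, ?_⟩
  have h2 : a u⁺ u⁻ = a u₀ v₀ + a u₀ v₁ + a u₁ v₀ + a u₁ v₁ := by
    rw [hup, hum]; simp only [map_add, LinearMap.add_apply]; ring
  have h3 : a u₀ v₁ = 0 := by rw [hsymm]; exact hv₁ u₀ hu₀
  have h4 : a u₁ v₀ = 0 := hu₁ v₀ hv₀
  rw [h2, h3, h4, ← sub_eq_zero.mp key]; ring
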